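/- arXiv:1906.02149 — 7 statements merged into one kernel-verified Lean document; each statement's English description precedes it below -/
import Mathlib

section
/- A restriction semigroup S is proper if and only if the relations σ and ∼ coincide, i.e., for all s, t ∈ S: s σ t if and only if s ∼ t. (Since s ∼ t always implies s σ t, this is equivalent to: s σ t implies s ∼ t.) -/
/-- A (two-sided) restriction semigroup: a semigroup with unary operations
`rstar` (`x ↦ x^*`) and `rplus` (`x ↦ x^+`) satisfying the standard identities. -/
class RestrictionSemigroup (S : Type*) extends Semigroup S where
  rstar : S → S
  rplus : S → S
  rplus_mul_self : ∀ x : S, rplus x * x = x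
  rplus_comm : ∀ x y : S, rplus x * rplus y = rplus y * rplus x
  rplus_rplus_mul : ∀ x y : S, rplus (rplus x * y) = rplus x * rplus y
  mul_rplus : ∀ x y : S, rplus (x * y) * x = x * rplus y
  mul_rstar_self : ∀ x : S, x * rstar x = x
  rstar_comm : ∀ x y : S, rstar x * rstar y = rstar y * rstar x
  rstar_mul_rstar : ∀ x y : S, rstar (x * rstar y) = rstar x * rstar y
  rstar_mul : ∀ x y : S, y * rstar (x * y) = rstar x * y
  rstar_rplus : ∀ x : S, rstar (rplus x) = rplus x
  rplus_rstar : ∀ x : S, rplus (rstar x) = rstar x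

open RestrictionSemigroup

/-- `e` is a projection: `e ∈ P(S) = {s^* : s ∈ S}`. -/
def IsProj {S : Type*} [RestrictionSemigroup S] (e : S) : Prop :=
  ∃ s : S, rstar s = e

/-- The natural partial order: `s ≤ t` iff `s = t f` for some projection `f`. -/
def rle {S : Type*} [RestrictionSemigroup S] (s t : S) : Prop :=
  ∃ f : S, IsProj f ∧ s = t * f

/-- Compatibility: `s ∼ t` iff `s t^* = t s^*` and `t^+ s = s^+ t`. -/
def compat {S : Type*} [RestrictionSemigroup S] (s t : S) : Prop :=
  s * rstar t = t * rstar s ∧ rplus t * s = rplus s * t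

/-- The relation σ: `s σ t` iff `e s = e t` for some projection `e`. -/
def sigmaR {S : Type*} [RestrictionSemigroup S] (s t : S) : Prop :=
  ∃ e : S, IsProj e ∧ e * s = e * t

/-- A restriction semigroup is proper if σ-related elements with equal `^*`
(resp. equal `^+`) are equal. -/
def ProperRS (S : Type*) [RestrictionSemigroup S] : Prop :=
  (∀ s t : S, rstar s = rstar t → sigmaR s t → s = t) ∧
    (∀ s t : S, rplus s = rplus t → sigmaR s t → s = t)

section Aux
variable {S : Type*} [RestrictionSemigroup S]

lemma rstar_rstar' (x : S) : rstar (rstar x) = rstar x := by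
  calc rstar (rstar x) = rstar (rplus (rstar x)) := by rw [rplus_rstar]
    _ = rplus (rstar x) := rstar_rplus _
    _ = rstar x := rplus_rstar _

lemma IsProj.rstar_eq {e : S} (he : IsProj e) : rstar e = e := by
  obtain ⟨s, rfl⟩ := he; exact rstar_rstar' s

lemma IsProj.idem {e : S} (he : IsProj e) : e * e = e := by
  calc e * e = e * rstar e := by rw [he.rstar_eq]
    _ = e := mul_rstar_self e

lemma IsProj.mul_comm' {e f : S} (he : IsProj e) (hf : IsProj f) : e * f = f * e := by
  rw [← he.rstar_eq, ← hf.rstar_eq, rstar_comm]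

lemma isProj_rplus (t : S) : IsProj (rplus t) := ⟨rplus t, rstar_rplus t⟩

lemma IsProj.mul {e f : S} (he : IsProj e) (hf : IsProj f) : IsProj (e * f) := by
  refine ⟨e * f, ?_⟩
  conv_lhs => rw [← hf.rstar_eq]
  rw [rstar_mul_rstar, he.rstar_eq, hf.rstar_eq]

end Aux

theorem stmt5 {S : Type*} [RestrictionSemigroup S] :
    ProperRS S ↔ ∀ s t : S, sigmaR s t ↔ compat s t := by
  constructor
  · rintro ⟨hst, hpl⟩ s t
    constructor
    · rintro ⟨e, he, hes⟩
      constructor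
      · apply hst
        · rw [rstar_mul_rstar, rstar_mul_rstar, rstar_comm]
        · refine ⟨e, he, ?_⟩
          have h1 : e * (s * rstar t) = e * t := by
            rw [← mul_assoc, hes, mul_assoc, mul_rstar_self]
          have h2 : e * (t * rstar s) = e * t := by
            rw [← mul_assoc, ← hes, mul_assoc, mul_rstar_self, hes]
          exact h1.trans h2.symm
      · apply hpl
        · rw [rplus_rplus_mul, rplus_rplus_mul, rplus_comm]
        · refine ⟨e, he, ?_⟩
          have hct : e * rplus t = rplus t * e := he.mul_comm' (isProj_rplus t)
          have hcs : e * rplus s = rplus s * e := he.mul_comm' (isProj_rplus s)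
          have h1 : e * (rplus t * s) = e * t := by
            rw [← mul_assoc, hct, mul_assoc, hes, ← mul_assoc, ← hct, mul_assoc,
              rplus_mul_self]
          have h2 : e * (rplus s * t) = e * t := by
            rw [← mul_assoc, hcs, mul_assoc, ← hes, ← mul_assoc, ← hcs, mul_assoc,
              rplus_mul_self, hes]
          exact h1.trans h2.symm
    · rintro ⟨h1, h2⟩
      refine ⟨rplus s * rplus t, (isProj_rplus s).mul (isProj_rplus t), ?_⟩
      have ha : rplus s * rplus t * s = rplus s * t := by
        rw [mul_assoc, h2, ← mul_assoc, (isProj_rplus s).idem]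
      have hb : rplus s * rplus t * t = rplus s * t := by
        rw [mul_assoc, rplus_mul_self]
      exact ha.trans hb.symm
  · intro h
    constructor
    · intro s t hstar hsig
      obtain ⟨h1, _⟩ := (h s t).mp hsig
      rw [hstar] at h1
      calc s = s * rstar s := (mul_rstar_self s).symm
        _ = s * rstar t := by rw [hstar]
        _ = t * rstar t := h1
        _ = t := mul_rstar_self t
    · intro s t hplus hsig
      obtain ⟨_, h2⟩ := (h s t).mp hsig
      rw [hplus] at h2
      calc s = rplus s * s := (rplus_mul_self s).symm
        _ = rplus t * s := by rw [hplus]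
        _ = rplus t * t := h2
        _ = t := rplus_mul_self t
end

section
/- Let S and T be inverse semigroups, regarded as restriction semigroups, and let φ: S → T be a premorphism. The following are equivalent: (1) φ satisfies (Sr): φ(s)φ(t) = φ(st)φ(t)^* for all s, t ∈ S; (2) φ satisfies (Sl): φ(s)φ(t) = φ(s)^+ φ(st) for all s, t ∈ S; (3) φ is strong, i.e., satisfies both (Sr) and (Sl). -/
/-- An inverse semigroup: each element has a unique (von Neumann) inverse. -/
class InverseSemigroup (S : Type*) extends Semigroup S where
  inv : S → S
  mul_inv_mul : ∀ a : S, a * inv a * a = a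
  inv_mul_inv : ∀ a : S, inv a * a * inv a = inv a
  inv_unique : ∀ a b : S, a * b * a = a → b * a * b = b → b = inv a

/-- `s^* = s⁻¹ s` when an inverse semigroup is regarded as a restriction semigroup. -/
def istar {S : Type*} [InverseSemigroup S] (s : S) : S := InverseSemigroup.inv s * s

/-- `s^+ = s s⁻¹` when an inverse semigroup is regarded as a restriction semigroup. -/
def iplus {S : Type*} [InverseSemigroup S] (s : S) : S := s * InverseSemigroup.inv s

/-- `e ∈ P(S) = {s^* : s ∈ S}` for an inverse semigroup. -/
def iIsProj {S : Type*} [InverseSemigroup S] (e : S) : Prop := ∃ s : S, istar s = e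

/-- The natural partial order on an inverse semigroup regarded as a restriction semigroup. -/
def ile {S : Type*} [InverseSemigroup S] (s t : S) : Prop :=
  ∃ f : S, iIsProj f ∧ s = t * f

namespace IS
variable {S : Type*} [InverseSemigroup S]

local notation "iv" => InverseSemigroup.inv

lemma mim (a : S) : a * iv a * a = a := InverseSemigroup.mul_inv_mul a
lemma imi (a : S) : iv a * a * iv a = iv a := InverseSemigroup.inv_mul_inv a

lemma idem_inv {e : S} (he : e * e = e) : iv e = e :=
  (InverseSemigroup.inv_unique e e (by rw [he, he]) (by rw [he, he])).symm

lemma idem_prod_eq_inv {e f : S} (he : e * e = e) (hf : f * f = f) :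
    iv (e * f) = f * iv (e * f) * e := by
  refine (InverseSemigroup.inv_unique (e * f) (f * iv (e * f) * e) ?_ ?_).symm
  · have : e * f * (f * iv (e * f) * e) * (e * f) = e * f * iv (e * f) * (e * f) := by
      simp only [mul_assoc]
      rw [← mul_assoc f f, hf, ← mul_assoc e e, he]
    rw [this, mim]
  · have h1 : f * iv (e * f) * e * (e * f) * (f * iv (e * f) * e)
        = f * (iv (e * f) * (e * f) * iv (e * f)) * e := by
      simp only [mul_assoc]
      rw [← mul_assoc e e, he, ← mul_assoc f f, hf]
    rw [h1, imi]

lemma idem_mul {e f : S} (he : e * e = e) (hf : f * f = f) :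
    (e * f) * (e * f) = e * f := by
  have key : iv (e * f) = f * iv (e * f) * e := idem_prod_eq_inv he hf
  have hxx : iv (e * f) * iv (e * f) = iv (e * f) := by
    calc iv (e * f) * iv (e * f)
        = (f * iv (e * f) * e) * (f * iv (e * f) * e) := by rw [← key]
      _ = f * (iv (e * f) * (e * f) * iv (e * f)) * e := by simp only [mul_assoc]
      _ = f * iv (e * f) * e := by rw [imi]
      _ = iv (e * f) := key.symm
  have hef : e * f = iv (iv (e * f)) :=
    InverseSemigroup.inv_unique (iv (e * f)) (e * f) (imi _) (mim _)
  rw [hef, idem_inv hxx, hxx]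

lemma idem_comm {e f : S} (he : e * e = e) (hf : f * f = f) :
    e * f = f * e := by
  have hef : (e * f) * (e * f) = e * f := idem_mul he hf
  have hfe : (f * e) * (f * e) = f * e := idem_mul hf he
  have h1 : f * e = iv (e * f) := by
    refine InverseSemigroup.inv_unique (e * f) (f * e) ?_ ?_
    · calc e * f * (f * e) * (e * f) = e * (f * f) * (e * e) * f := by
            simp only [mul_assoc]
        _ = (e * f) * (e * f) := by rw [hf, he]; simp only [mul_assoc]
        _ = e * f := hef
    · calc f * e * (e * f) * (f * e) = f * (e * e) * (f * f) * e := by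
            simp only [mul_assoc]
        _ = (f * e) * (f * e) := by rw [he, hf]; simp only [mul_assoc]
        _ = f * e := hfe
  rw [h1, idem_inv hef]


lemma sidem (y : S) : (iv y * y) * (iv y * y) = iv y * y := by
  rw [mul_assoc, ← mul_assoc y (iv y) y, mim]

lemma pidem (y : S) : (y * iv y) * (y * iv y) = y * iv y := by
  rw [mul_assoc, ← mul_assoc (iv y) y (iv y), imi]

lemma inv_mul (a b : S) : iv (a * b) = iv b * iv a := by
  refine (InverseSemigroup.inv_unique (a * b) (iv b * iv a) ?_ ?_).symm
  · calc a * b * (iv b * iv a) * (a * b)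
        = a * ((b * iv b) * (iv a * a)) * b := by simp only [mul_assoc]
      _ = a * ((iv a * a) * (b * iv b)) * b := by rw [idem_comm (pidem b) (sidem a)]
      _ = (a * iv a * a) * (b * iv b * b) := by simp only [mul_assoc]
      _ = a * b := by rw [mim, mim]
  · calc iv b * iv a * (a * b) * (iv b * iv a)
        = iv b * ((iv a * a) * (b * iv b)) * iv a := by simp only [mul_assoc]
      _ = iv b * ((b * iv b) * (iv a * a)) * iv a := by rw [idem_comm (sidem a) (pidem b)]
      _ = (iv b * b * iv b) * (iv a * a * iv a) := by simp only [mul_assoc]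
      _ = iv b * iv a := by rw [imi, imi]

lemma istar_idem (a : S) : istar a * istar a = istar a := sidem a
lemma iplus_idem (a : S) : iplus a * iplus a = iplus a := pidem a

lemma mul_istar (a : S) : a * istar a = a := by
  show a * (iv a * a) = a
  rw [← mul_assoc, mim]

lemma iplus_mul (a : S) : iplus a * a = a := mim a

lemma isProj_iff {e : S} : iIsProj e ↔ e * e = e := by
  constructor
  · rintro ⟨s, rfl⟩; exact sidem s
  · intro he; exact ⟨e, by show iv e * e = e; rw [idem_inv he, he]⟩

lemma ile_iff {x y : S} : ile x y ↔ x = y * istar x := by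
  constructor
  · rintro ⟨f, hf, hx⟩
    have hfe : f * f = f := isProj_iff.mp hf
    have : y * istar x = x := by
      calc y * istar x = y * (iv (y * f) * (y * f)) := by rw [← hx]; rfl
        _ = y * ((f * iv y) * (y * f)) := by rw [inv_mul, idem_inv hfe]
        _ = y * (f * (iv y * y) * f) := by simp only [mul_assoc]
        _ = y * (iv y * y * f * f) := by rw [idem_comm hfe (sidem y)]
        _ = y * (iv y * y) * f := by rw [mul_assoc (iv y * y) f f, hfe]; simp only [mul_assoc]
        _ = y * f := by rw [← mul_assoc, mim]
        _ = x := hx.symm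
    exact this.symm
  · intro h
    exact ⟨istar x, ⟨x, rfl⟩, h⟩

lemma ile_of_idem_left {e x y : S} (he : e * e = e) (hx : x = e * y) : ile x y := by
  have hc : e * (y * iv y) = (y * iv y) * e := idem_comm he (pidem y)
  refine ⟨iv y * e * y, isProj_iff.mpr ?_, ?_⟩
  · calc (iv y * e * y) * (iv y * e * y)
        = iv y * (e * (y * iv y)) * (e * y) := by simp only [mul_assoc]
      _ = iv y * ((y * iv y) * e) * (e * y) := by rw [hc]
      _ = iv y * y * iv y * (e * e) * y := by simp only [mul_assoc]
      _ = iv y * e * y := by rw [imi, he]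
  · calc x = e * y := hx
      _ = e * (y * iv y * y) := by rw [mim]
      _ = (e * (y * iv y)) * y := by simp only [mul_assoc]
      _ = ((y * iv y) * e) * y := by rw [hc]
      _ = y * (iv y * e * y) := by simp only [mul_assoc]

lemma ile_of_idem_right {e x y : S} (he : e * e = e) (hx : x = y * e) : ile x y :=
  ⟨e, isProj_iff.mpr he, hx⟩

lemma ile_mul_left {x y : S} (z : S) (h : ile x y) : ile (z * x) (z * y) := by
  obtain ⟨f, hf, hx⟩ := h
  exact ⟨f, hf, by rw [hx, mul_assoc]⟩

lemma ile_mul_right {x y : S} (z : S) (h : ile x y) : ile (x * z) (y * z) := by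
  obtain ⟨f, hf, hx⟩ := h
  have hfe : f * f = f := isProj_iff.mp hf
  have hc : f * (z * iv z) = (z * iv z) * f := idem_comm hfe (pidem z)
  refine ⟨iv z * f * z, isProj_iff.mpr ?_, ?_⟩
  · calc (iv z * f * z) * (iv z * f * z)
        = iv z * (f * (z * iv z)) * (f * z) := by simp only [mul_assoc]
      _ = iv z * ((z * iv z) * f) * (f * z) := by rw [hc]
      _ = iv z * z * iv z * (f * f) * z := by simp only [mul_assoc]
      _ = iv z * f * z := by rw [imi, hfe]
  · calc x * z = y * f * z := by rw [hx]
      _ = y * f * (z * iv z * z) := by rw [mim]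
      _ = y * ((f * (z * iv z)) * z) := by simp only [mul_assoc]
      _ = y * (((z * iv z) * f) * z) := by rw [hc]
      _ = (y * z) * (iv z * f * z) := by simp only [mul_assoc]

lemma ile_trans {x y z : S} (h1 : ile x y) (h2 : ile y z) : ile x z := by
  obtain ⟨f, hf, hx⟩ := h1
  obtain ⟨g, hg, hy⟩ := h2
  exact ⟨g * f, isProj_iff.mpr (idem_mul (isProj_iff.mp hg) (isProj_iff.mp hf)),
    by rw [hx, hy, mul_assoc]⟩

lemma iplus_mul_of_ile {x y : S} (h : ile x y) : x = iplus x * y := by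
  obtain ⟨f, hf, hx⟩ := h
  have hfe : f * f = f := isProj_iff.mp hf
  have hinv : iv x = f * iv y := by rw [hx, inv_mul, idem_inv hfe]
  have : iplus x * y = x := by
    calc iplus x * y = y * f * (f * iv y) * y := by
          show x * iv x * y = y * f * (f * iv y) * y
          rw [hinv, hx]
      _ = y * (f * f * (iv y * y)) := by simp only [mul_assoc]
      _ = y * (f * (iv y * y)) := by rw [hfe]
      _ = y * (iv y * y * f) := by rw [idem_comm hfe (sidem y)]
      _ = (y * (iv y * y)) * f := by simp only [mul_assoc]
      _ = y * f := by rw [← mul_assoc, mim]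
      _ = x := hx.symm
  exact this.symm

lemma ile_antisymm {x y : S} (h1 : ile x y) (h2 : ile y x) : x = y := by
  have hx : x = y * (iv x * x) := ile_iff.mp h1
  have hy : y = x * (iv y * y) := ile_iff.mp h2
  have hxy : x = x * ((iv y * y) * (iv x * x)) := by
    conv_lhs => rw [hx, hy]
    simp only [mul_assoc]
  have hyx : y = y * ((iv x * x) * (iv y * y)) := by
    conv_lhs => rw [hy, hx]
    simp only [mul_assoc]
  have hsx : iv x * x = (iv x * x) * (iv y * y) := by
    calc iv x * x = iv x * (x * ((iv y * y) * (iv x * x))) := by rw [← hxy]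
      _ = (iv x * x) * ((iv y * y) * (iv x * x)) := by simp only [mul_assoc]
      _ = (iv x * x) * ((iv x * x) * (iv y * y)) := by rw [idem_comm (sidem y) (sidem x)]
      _ = ((iv x * x) * (iv x * x)) * (iv y * y) := by simp only [mul_assoc]
      _ = (iv x * x) * (iv y * y) := by rw [sidem]
  have hsy : iv y * y = (iv y * y) * (iv x * x) := by
    calc iv y * y = iv y * (y * ((iv x * x) * (iv y * y))) := by rw [← hyx]
      _ = (iv y * y) * ((iv x * x) * (iv y * y)) := by simp only [mul_assoc]
      _ = (iv y * y) * ((iv y * y) * (iv x * x)) := by rw [idem_comm (sidem x) (sidem y)]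
      _ = ((iv y * y) * (iv y * y)) * (iv x * x) := by simp only [mul_assoc]
      _ = (iv y * y) * (iv x * x) := by rw [sidem]
  have hst : iv x * x = iv y * y := by
    rw [hsx, idem_comm (sidem x) (sidem y), ← hsy]
  calc x = y * (iv x * x) := hx
    _ = y * (iv y * y) := by rw [hst]
    _ = y := by rw [← mul_assoc, mim]


lemma istar_def (a : S) : istar a = iv a * a := rfl
lemma iplus_def (a : S) : iplus a = a * iv a := rfl

lemma istar_mul_inv (a : S) : istar a * iv a = iv a := imi a

lemma idem_istar {e : S} (he : e * e = e) : istar e = e := by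
  rw [istar_def, idem_inv he, he]

lemma idem_iplus {e : S} (he : e * e = e) : iplus e = e := by
  rw [iplus_def, idem_inv he, he]

lemma idem_le_absorb {u v : S} (hu : u * u = u) (hv : v * v = v) (h : ile u v) :
    v * u = u ∧ u * v = u := by
  have h1 : u = v * istar u := ile_iff.mp h
  rw [idem_istar hu] at h1
  exact ⟨h1.symm, by rw [idem_comm hu hv, ← h1]⟩

section Main

variable {T : Type*} [InverseSemigroup T] (φ : S → T)

lemma sr_imp_sl
    (hPM1 : ∀ s t : S, ile (φ s * φ t) (φ (s * t)))
    (hPM2 : ∀ s : S, ile (istar (φ s)) (φ (istar s)))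
    (hSr : ∀ s t : S, φ s * φ t = φ (s * t) * istar (φ t)) :
    ∀ s t : S, φ s * φ t = iplus (φ s) * φ (s * t) := by
  -- φ maps idempotents to idempotents
  have hA : ∀ e : S, e * e = e → φ e * φ e = φ e := by
    intro e he
    have h0 := hSr e e
    rw [he, mul_istar] at h0
    exact h0
  -- (φ s)⁻¹ ≤ φ (s⁻¹)
  have hB : ∀ s : S, ile (iv (φ s)) (φ (iv s)) := by
    intro s
    have hPM2' : ile (istar (φ s)) (φ (iv s * s)) := hPM2 s
    have habs : φ (iv s * s) * istar (φ s) = istar (φ s) :=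
      (idem_le_absorb (istar_idem (φ s)) (hA _ (sidem s)) hPM2').1
    have hkey : iv (φ s) = φ (iv s) * iplus (φ s) := by
      have h0 : φ (iv s) * iplus (φ s) = iv (φ s) := by
        calc φ (iv s) * iplus (φ s)
            = (φ (iv s) * φ s) * iv (φ s) := by rw [iplus_def, ← mul_assoc]
          _ = (φ (iv s * s) * istar (φ s)) * iv (φ s) := by rw [hSr (iv s) s]
          _ = istar (φ s) * iv (φ s) := by rw [habs]
          _ = iv (φ s) := istar_mul_inv _
      exact h0.symm
    exact ile_of_idem_right (iplus_idem (φ s)) hkey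
  -- φ is order-preserving
  have hC : ∀ u t : S, ile u t → ile (φ u) (φ t) := by
    intro u t h
    have hu : u = t * istar u := ile_iff.mp h
    have hA2 : φ (istar u) * φ (istar u) = φ (istar u) := hA _ (istar_idem u)
    have key : φ t * φ (istar u) = φ u * φ (istar u) := by
      have h0 := hSr t (istar u)
      rw [← hu, idem_istar hA2] at h0
      exact h0
    have h2 : istar (φ u) * φ (istar u) = istar (φ u) :=
      (idem_le_absorb (istar_idem (φ u)) hA2 (hPM2 u)).2
    have hfin : φ u = φ t * φ (istar u) := by
      calc φ u = φ u * istar (φ u) := (mul_istar _).symm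
        _ = φ u * (istar (φ u) * φ (istar u)) := by rw [h2]
        _ = (φ u * istar (φ u)) * φ (istar u) := by rw [mul_assoc]
        _ = φ u * φ (istar u) := by rw [mul_istar]
        _ = φ t * φ (istar u) := key.symm
    exact ile_of_idem_right hA2 hfin
  -- main proof
  intro s t
  have hplus : φ s * φ t = iplus (φ s * φ t) * φ (s * t) := iplus_mul_of_ile (hPM1 s t)
  have hplusabs : iplus (φ s * φ t) * iplus (φ s) = iplus (φ s * φ t) := by
    calc iplus (φ s * φ t) * iplus (φ s)
        = (φ s * φ t * (iv (φ t) * iv (φ s))) * (φ s * iv (φ s)) := by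
          rw [iplus_def, iplus_def, inv_mul]
      _ = φ s * φ t * (iv (φ t) * (iv (φ s) * φ s * iv (φ s))) := by simp only [mul_assoc]
      _ = φ s * φ t * (iv (φ t) * iv (φ s)) := by rw [imi]
      _ = iplus (φ s * φ t) := by rw [iplus_def, inv_mul]
  have h_ab : ile (φ s * φ t) (iplus (φ s) * φ (s * t)) := by
    have hx : φ s * φ t = iplus (φ s * φ t) * (iplus (φ s) * φ (s * t)) := by
      rw [← mul_assoc, hplusabs, ← hplus]
    exact ile_of_idem_left (iplus_idem (φ s * φ t)) hx
  have step3 : ile (iv s * (s * t)) t :=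
    ile_of_idem_left (sidem s) (mul_assoc (iv s) s t).symm
  have chain : ile (iv (φ s) * φ (s * t)) (φ t) :=
    ile_trans (ile_trans (ile_mul_right (φ (s * t)) (hB s)) (hPM1 (iv s) (s * t)))
      (hC _ _ step3)
  have h_ba : ile (iplus (φ s) * φ (s * t)) (φ s * φ t) := by
    have h5 := ile_mul_left (φ s) chain
    rw [iplus_def, mul_assoc]
    exact h5
  exact ile_antisymm h_ab h_ba

lemma sl_imp_sr
    (hPM1 : ∀ s t : S, ile (φ s * φ t) (φ (s * t)))
    (hPM3 : ∀ s : S, ile (iplus (φ s)) (φ (iplus s)))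
    (hSl : ∀ s t : S, φ s * φ t = iplus (φ s) * φ (s * t)) :
    ∀ s t : S, φ s * φ t = φ (s * t) * istar (φ t) := by
  -- φ maps idempotents to idempotents
  have hA : ∀ e : S, e * e = e → φ e * φ e = φ e := by
    intro e he
    have h0 := hSl e e
    rw [he, iplus_mul] at h0
    exact h0
  -- (φ t)⁻¹ ≤ φ (t⁻¹)
  have hB : ∀ t : S, ile (iv (φ t)) (φ (iv t)) := by
    intro t
    have hPM3' : ile (iplus (φ t)) (φ (t * iv t)) := hPM3 t
    have habs : iplus (φ t) * φ (t * iv t) = iplus (φ t) :=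
      (idem_le_absorb (iplus_idem (φ t)) (hA _ (pidem t)) hPM3').2
    have hkey : iv (φ t) = istar (φ t) * φ (iv t) := by
      have h0 : istar (φ t) * φ (iv t) = iv (φ t) := by
        calc istar (φ t) * φ (iv t)
            = iv (φ t) * (φ t * φ (iv t)) := by rw [istar_def, mul_assoc]
          _ = iv (φ t) * (iplus (φ t) * φ (t * iv t)) := by rw [hSl t (iv t)]
          _ = iv (φ t) * iplus (φ t) := by rw [habs]
          _ = iv (φ t) := by rw [iplus_def, ← mul_assoc, imi]
      exact h0.symm
    exact ile_of_idem_left (istar_idem (φ t)) hkey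
  -- φ is order-preserving
  have hC : ∀ u t : S, ile u t → ile (φ u) (φ t) := by
    intro u t h
    have hu : u = iplus u * t := iplus_mul_of_ile h
    have hA2 : φ (iplus u) * φ (iplus u) = φ (iplus u) := hA _ (iplus_idem u)
    have key : φ (iplus u) * φ t = φ (iplus u) * φ u := by
      have h0 := hSl (iplus u) t
      rw [← hu, idem_iplus hA2] at h0
      exact h0
    have h2 : iplus (φ u) * φ (iplus u) = iplus (φ u) :=
      (idem_le_absorb (iplus_idem (φ u)) hA2 (hPM3 u)).2
    have hfin : φ u = iplus (φ u) * φ t := by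
      calc φ u = iplus (φ u) * φ u := (iplus_mul _).symm
        _ = (iplus (φ u) * φ (iplus u)) * φ u := by rw [h2]
        _ = iplus (φ u) * (φ (iplus u) * φ u) := by rw [mul_assoc]
        _ = iplus (φ u) * (φ (iplus u) * φ t) := by rw [← key]
        _ = (iplus (φ u) * φ (iplus u)) * φ t := by rw [mul_assoc]
        _ = iplus (φ u) * φ t := by rw [h2]
    exact ile_of_idem_left (iplus_idem (φ u)) hfin
  -- main proof
  intro s t
  have hstar : φ s * φ t = φ (s * t) * istar (φ s * φ t) := ile_iff.mp (hPM1 s t)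
  have hstarabs : istar (φ t) * istar (φ s * φ t) = istar (φ s * φ t) := by
    calc istar (φ t) * istar (φ s * φ t)
        = (iv (φ t) * φ t) * ((iv (φ t) * iv (φ s)) * (φ s * φ t)) := by
          rw [istar_def, istar_def, inv_mul]
      _ = (iv (φ t) * φ t * iv (φ t)) * (iv (φ s) * (φ s * φ t)) := by simp only [mul_assoc]
      _ = iv (φ t) * (iv (φ s) * (φ s * φ t)) := by rw [imi]
      _ = istar (φ s * φ t) := by rw [istar_def, inv_mul]; simp only [mul_assoc]
  have h_ab : ile (φ s * φ t) (φ (s * t) * istar (φ t)) := by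
    have hx : φ s * φ t = (φ (s * t) * istar (φ t)) * istar (φ s * φ t) := by
      rw [mul_assoc, hstarabs, ← hstar]
    exact ile_of_idem_right (istar_idem (φ s * φ t)) hx
  have step3 : ile (s * t * iv t) s :=
    ile_of_idem_right (pidem t) (mul_assoc s t (iv t))
  have chain : ile (φ (s * t) * iv (φ t)) (φ s) :=
    ile_trans (ile_trans (ile_mul_left (φ (s * t)) (hB t)) (hPM1 (s * t) (iv t)))
      (hC _ _ step3)
  have h_ba : ile (φ (s * t) * istar (φ t)) (φ s * φ t) := by
    have h5 := ile_mul_right (φ t) chain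
    rw [istar_def, ← mul_assoc]
    exact h5
  exact ile_antisymm h_ab h_ba

end Main

end IS

theorem stmt8 {S T : Type*} [InverseSemigroup S] [InverseSemigroup T]
    (φ : S → T)
    (hPM1 : ∀ s t : S, ile (φ s * φ t) (φ (s * t)))
    (hPM2 : ∀ s : S, ile (istar (φ s)) (φ (istar s)))
    (hPM3 : ∀ s : S, ile (iplus (φ s)) (φ (iplus s))) :
    List.TFAE
      [∀ s t : S, φ s * φ t = φ (s * t) * istar (φ t),
       ∀ s t : S, φ s * φ t = iplus (φ s) * φ (s * t),
       (∀ s t : S, φ s * φ t = φ (s * t) * istar (φ t)) ∧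
         (∀ s t : S, φ s * φ t = iplus (φ s) * φ (s * t))] := by
  tfae_have 1 → 3 := fun h => ⟨h, IS.sr_imp_sl φ hPM1 hPM2 h⟩
  tfae_have 2 → 3 := fun h => ⟨IS.sl_imp_sr φ hPM1 hPM3 h, h⟩
  tfae_have 3 → 1 := And.left
  tfae_have 3 → 2 := And.right
  tfae_finish
end

section
/- Let φ: S → T be a premorphism between restriction semigroups. Then: (1) φ satisfies (LSr) (φ(s t^+)φ(t) = φ(st)φ(t)^* for all s, t ∈ S) if and only if φ satisfies (LSr'): φ(s)φ(t) = φ(st)φ(t)^* for all s, t ∈ S with s^* ≤ t^+; (2) φ satisfies (LSl) (φ(s)φ(s^* t) = φ(s)^+ φ(st) for all s, t ∈ S) if and only if φ satisfies (LSl'): φ(s)φ(t) = φ(s)^+ φ(st) for all s, t ∈ S with t^+ ≤ s^*. -/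
open RestrictionSemigroup

section Aux
variable {S : Type*} [RestrictionSemigroup S]

lemma rstar_idem (x : S) : rstar x * rstar x = rstar x := by
  have h := mul_rstar_self (rstar x)
  rwa [rstar_rstar'] at h

lemma rplus_idem (x : S) : rplus x * rplus x = rplus x := by
  have h := rstar_idem (rplus x)
  rwa [rstar_rplus] at h

lemma comm_pr (x y : S) : rstar x * rplus y = rplus y * rstar x := by
  rw [← rplus_rstar x]; exact rplus_comm _ _

lemma lemA {s t u : S} (h : rstar s = rplus t * rstar u) : s * rplus t = s := by
  have hs' : s * (rplus t * rstar u) = s := by rw [← h, mul_rstar_self]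
  have key : (rplus t * rstar u) * rplus t = rplus t * rstar u := by
    rw [mul_assoc, comm_pr, ← mul_assoc, rplus_idem]
  calc s * rplus t = (s * (rplus t * rstar u)) * rplus t := by rw [hs']
    _ = s * ((rplus t * rstar u) * rplus t) := mul_assoc _ _ _
    _ = s * (rplus t * rstar u) := by rw [key]
    _ = s := hs'

lemma lemB {s t u : S} (h : rplus t = rstar s * rstar u) : rstar s * t = t := by
  calc rstar s * t = rstar s * (rplus t * t) := by rw [rplus_mul_self]
    _ = rstar s * (rstar s * (rstar u * t)) := by rw [h, mul_assoc]
    _ = (rstar s * rstar s) * (rstar u * t) := (mul_assoc _ _ _).symm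
    _ = rplus t * t := by rw [rstar_idem, h, mul_assoc]
    _ = t := rplus_mul_self t

end Aux

theorem stmt9 {S T : Type*} [RestrictionSemigroup S] [RestrictionSemigroup T]
    (φ : S → T)
    (hPM1 : ∀ s t : S, rle (φ s * φ t) (φ (s * t)))
    (hPM2 : ∀ s : S, rle (rstar (φ s)) (φ (rstar s)))
    (hPM3 : ∀ s : S, rle (rplus (φ s)) (φ (rplus s))) :
    ((∀ s t : S, φ (s * rplus t) * φ t = φ (s * t) * rstar (φ t)) ↔
      (∀ s t : S, rle (rstar s) (rplus t) → φ s * φ t = φ (s * t) * rstar (φ t))) ∧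
    ((∀ s t : S, φ s * φ (rstar s * t) = rplus (φ s) * φ (s * t)) ↔
      (∀ s t : S, rle (rplus t) (rstar s) → φ s * φ t = rplus (φ s) * φ (s * t))) := by
  constructor
  · constructor
    · intro h s t hle
      obtain ⟨f, ⟨u, rfl⟩, hf⟩ := hle
      have hs : s * rplus t = s := lemA hf
      have := h s t
      rwa [hs] at this
    · intro h s t
      have heq : rstar (s * rplus t) = rstar s * rplus t := by
        conv_lhs => rw [← rstar_rplus t]
        rw [rstar_mul_rstar, rstar_rplus]
      have hle : rle (rstar (s * rplus t)) (rplus t) := by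
        refine ⟨rstar (s * rplus t), ⟨_, rfl⟩, ?_⟩
        rw [heq]
        symm
        rw [← mul_assoc, ← comm_pr, mul_assoc, rplus_idem]
      have := h (s * rplus t) t hle
      rwa [mul_assoc, rplus_mul_self] at this
  · constructor
    · intro h s t hle
      obtain ⟨f, ⟨u, rfl⟩, hf⟩ := hle
      have hs : rstar s * t = t := lemB hf
      have := h s t
      rwa [hs] at this
    · intro h s t
      have heq : rplus (rstar s * t) = rstar s * rplus t := by
        conv_lhs => rw [← rplus_rstar s]
        rw [rplus_rplus_mul, rplus_rstar]
      have hle : rle (rplus (rstar s * t)) (rstar s) := by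
        refine ⟨rplus (rstar s * t), ⟨rplus (rstar s * t), rstar_rplus _⟩, ?_⟩
        conv_lhs => rw [heq]
        rw [heq, ← mul_assoc, rstar_idem]
      have := h s (rstar s * t) hle
      rwa [← mul_assoc, mul_rstar_self] at this
end

section
/- Let φ: S → T be a premorphism between inverse semigroups (regarded as restriction semigroups). Then each of the following four conditions is equivalent to (Inv): φ(s⁻¹) = φ(s)⁻¹ for all s ∈ S. (LSr'): φ(s)φ(t) = φ(st)φ(t)^* for all s, t with s^* ≤ t^+; (LSl'): φ(s)φ(t) = φ(s)^+ φ(st) for all s, t with t^+ ≤ s^*; (LSr''): φ(s)φ(t) = φ(st)φ(t)^* for all s, t with s^* = t^+; (LSl''): φ(s)φ(t) = φ(s)^+ φ(st) for all s, t with t^+ = s^*. Consequently, φ is locally strong (satisfies both (LSr) and (LSl)) if and only if it satisfies (Inv). -/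
namespace ISG
open InverseSemigroup
variable {S : Type*} [InverseSemigroup S]

local notation "i" => InverseSemigroup.inv

lemma iu (a b : S) (h1 : a * b * a = a) (h2 : b * a * b = b) : b = i a :=
  InverseSemigroup.inv_unique a b h1 h2

lemma inv_inv (a : S) : i (i a) = a :=
  (iu (i a) a (inv_mul_inv a) (mul_inv_mul a)).symm

lemma si (a : S) : (i a * a) * (i a * a) = i a * a := by
  have h : (i a * a) * (i a * a) = i a * (a * i a * a) := by simp only [mul_assoc]
  rw [h, mul_inv_mul]

lemma pi (a : S) : (a * i a) * (a * i a) = a * i a := by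
  have h : (a * i a) * (a * i a) = a * (i a * a * i a) := by simp only [mul_assoc]
  rw [h, inv_mul_inv]

lemma star_idem (a : S) : istar a * istar a = istar a := si a
lemma plus_idem (a : S) : iplus a * iplus a = iplus a := pi a

lemma mim (a : S) : a * (i a * a) = a := by rw [← mul_assoc, mul_inv_mul]
lemma imi (a : S) : i a * (a * i a) = i a := by rw [← mul_assoc, inv_mul_inv]

lemma idem_inv {e : S} (he : e * e = e) : i e = e :=
  (iu e e (by rw [he, he]) (by rw [he, he])).symm

lemma idem_mul_idem {e f : S} (he : e * e = e) (hf : f * f = f) :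
    (e * f) * (e * f) = e * f := by
  have h1 : (e * f) * (f * i (e * f) * e) * (e * f) = e * f := by
    have h : (e * f) * (f * i (e * f) * e) * (e * f)
        = (e * (f * f)) * i (e * f) * ((e * e) * f) := by simp only [mul_assoc]
    rw [h, hf, he, mul_inv_mul]
  have h2 : (f * i (e * f) * e) * (e * f) * (f * i (e * f) * e) = f * i (e * f) * e := by
    have h : (f * i (e * f) * e) * (e * f) * (f * i (e * f) * e)
        = f * (i (e * f) * ((e * e) * ((f * f) * i (e * f))) * e) := by simp only [mul_assoc]
    rw [h, he, hf]
    have h' : i (e * f) * (e * (f * i (e * f))) = i (e * f) := by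
      have : i (e * f) * (e * (f * i (e * f))) = i (e * f) * (e * f) * i (e * f) := by
        simp only [mul_assoc]
      rw [this, inv_mul_inv]
    rw [h', ← mul_assoc]
  have hxe : f * i (e * f) * e = i (e * f) := iu (e * f) _ h1 h2
  have hxx : i (e * f) * i (e * f) = i (e * f) := by
    conv_lhs => rw [← hxe]
    have h : (f * i (e * f) * e) * (f * i (e * f) * e)
        = f * (i (e * f) * (e * f) * i (e * f)) * e := by simp only [mul_assoc]
    rw [h, inv_mul_inv, hxe]
  have hef : e * f = i (e * f) := (inv_inv (e * f)).symm.trans (idem_inv hxx)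
  rw [← hef] at hxx
  exact hxx

lemma idem_comm {e f : S} (he : e * e = e) (hf : f * f = f) : e * f = f * e := by
  have hef := idem_mul_idem he hf
  have hfe := idem_mul_idem hf he
  have h1 : (e * f) * (f * e) * (e * f) = e * f := by
    have h : (e * f) * (f * e) * (e * f) = (e * (f * f)) * ((e * e) * f) := by
      simp only [mul_assoc]
    rw [h, hf, he]
    exact hef
  have h2 : (f * e) * (e * f) * (f * e) = f * e := by
    have h : (f * e) * (e * f) * (f * e) = (f * (e * e)) * ((f * f) * e) := by
      simp only [mul_assoc]
    rw [h, he, hf]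
    exact hfe
  have h := iu (e * f) (f * e) h1 h2
  rw [h, idem_inv hef]

lemma mul_inv_rev (a b : S) : i (a * b) = i b * i a := by
  symm
  apply iu
  · have h : (a * b) * (i b * i a) * (a * b) = a * ((b * i b) * (i a * a)) * b := by
      simp only [mul_assoc]
    rw [h, idem_comm (pi b) (si a)]
    have h' : a * (i a * a * (b * i b)) * b = (a * (i a * a)) * ((b * i b) * b) := by
      simp only [mul_assoc]
    rw [h', ← mul_assoc a (i a) a, mul_inv_mul, mul_inv_mul]
  · have h : (i b * i a) * (a * b) * (i b * i a) = i b * ((i a * a) * (b * i b)) * i a := by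
      simp only [mul_assoc]
    rw [h, idem_comm (si a) (pi b)]
    have h' : i b * (b * i b * (i a * a)) * i a = (i b * (b * i b)) * ((i a * a) * i a) := by
      simp only [mul_assoc]
    rw [h', ← mul_assoc (i b) b (i b), inv_mul_inv, inv_mul_inv]

lemma proj_iff_idem (e : S) : iIsProj e ↔ e * e = e := by
  constructor
  · rintro ⟨s, rfl⟩; exact si s
  · intro he; exact ⟨e, by rw [istar, idem_inv he, he]⟩

lemma ile_refl (a : S) : ile a a :=
  ⟨i a * a, ⟨a, rfl⟩, by rw [← mul_assoc, mul_inv_mul]⟩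

lemma ile_of_eq_mul_idem {x y f : S} (hf : f * f = f) (h : x = y * f) : ile x y :=
  ⟨f, (proj_iff_idem f).mpr hf, h⟩

lemma ile_star {x y : S} (h : ile x y) : x = y * (i x * x) := by
  obtain ⟨f, hf, rfl⟩ := h
  have hf := (proj_iff_idem f).mp hf
  have hix : i (y * f) * (y * f) = f * (i y * y) * f := by
    rw [mul_inv_rev, idem_inv hf]
    simp only [mul_assoc]
  rw [hix, ← mul_assoc, idem_comm hf (si y)]
  have h2 : y * (i y * y * f) * f = (y * i y * y) * (f * f) := by simp only [mul_assoc]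
  rw [h2, mul_inv_mul, hf]

lemma ile_plus {x y : S} (h : ile x y) : x = (x * i x) * y := by
  obtain ⟨f, hf, rfl⟩ := h
  have hf := (proj_iff_idem f).mp hf
  have hix : (y * f) * i (y * f) = y * (f * i y) := by
    rw [mul_inv_rev, idem_inv hf]
    have : y * f * (f * i y) = y * ((f * f) * i y) := by simp only [mul_assoc]
    rw [this, hf]
  rw [hix]
  have h2 : y * (f * i y) * y = y * (f * (i y * y)) := by simp only [mul_assoc]
  rw [h2, idem_comm hf (si y), ← mul_assoc, ← mul_assoc, mul_inv_mul]

/-- if x ≤ y then x * y^* = x -/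
lemma ile_mul_star {x y : S} (h : ile x y) : x * (i y * y) = x := by
  conv_lhs => rw [ile_star h]
  rw [mul_assoc, idem_comm (si x) (si y)]
  have h2 : y * ((i y * y) * (i x * x)) = (y * i y * y) * (i x * x) := by
    simp only [mul_assoc]
  rw [h2, mul_inv_mul, ← ile_star h]

/-- if x ≤ y then y^+ * x = x -/
lemma plus_mul_ile {x y : S} (h : ile x y) : (y * i y) * x = x := by
  conv_lhs => rw [ile_plus h]
  have h1 : (y * i y) * ((x * i x) * y) = ((y * i y) * (x * i x)) * y := by
    simp only [mul_assoc]
  rw [h1, idem_comm (pi y) (pi x)]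
  have h2 : ((x * i x) * (y * i y)) * y = (x * i x) * (y * i y * y) := by
    simp only [mul_assoc]
  rw [h2, mul_inv_mul, ← ile_plus h]

/-- for idempotents e ≤ f : f * e = e -/
lemma idem_ile_absorb_left {e f : S} (hf : f * f = f) (h : ile e f) : f * e = e := by
  have h2 := plus_mul_ile h
  rwa [idem_inv hf, hf] at h2

lemma idem_ile_absorb_right {e f : S} (hf : f * f = f) (h : ile e f) : e * f = e := by
  have h2 := ile_mul_star h
  rwa [idem_inv hf, hf] at h2


section Premorphism
variable {S T : Type*} [InverseSemigroup S] [InverseSemigroup T] (φ : S → T)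

lemma idem_pres4
    (h4 : ∀ s t : S, i s * s = t * i t → φ s * φ t = φ (s * t) * (i (φ t) * φ t))
    {e : S} (he : e * e = e) : φ e * φ e = φ e := by
  have h := h4 e e (by rw [idem_inv he])
  rw [he] at h
  rw [h, ← mul_assoc, mul_inv_mul]

lemma h4_imp_inv (hPM2 : ∀ s : S, ile (i (φ s) * φ s) (φ (i s * s)))
    (h4 : ∀ s t : S, i s * s = t * i t → φ s * φ t = φ (s * t) * (i (φ t) * φ t)) :
    ∀ u : S, φ (i u) = i (φ u) := by
  have hstar : ∀ v : S, φ (i v) * φ v = i (φ v) * φ v := by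
    intro v
    have h := h4 (i v) v (by rw [inv_inv])
    have habs : φ (i v * v) * (i (φ v) * φ v) = i (φ v) * φ v :=
      idem_ile_absorb_left (idem_pres4 φ h4 (si v)) (hPM2 v)
    rw [h]
    exact habs
  intro u
  apply iu
  · rw [mul_assoc, hstar u, ← mul_assoc, mul_inv_mul]
  · have h := hstar (i u)
    rw [inv_inv] at h
    rw [mul_assoc, h, ← mul_assoc, mul_inv_mul]

lemma idem_pres5
    (h5 : ∀ s t : S, t * i t = i s * s → φ s * φ t = (φ s * i (φ s)) * φ (s * t))
    {e : S} (he : e * e = e) : φ e * φ e = φ e := by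
  have h := h5 e e (by rw [idem_inv he])
  rw [he] at h
  rw [h]
  exact mul_inv_mul (φ e)

lemma h5_imp_inv (hPM3 : ∀ s : S, ile (φ s * i (φ s)) (φ (s * i s)))
    (h5 : ∀ s t : S, t * i t = i s * s → φ s * φ t = (φ s * i (φ s)) * φ (s * t)) :
    ∀ u : S, φ (i u) = i (φ u) := by
  have hplus : ∀ v : S, φ v * φ (i v) = φ v * i (φ v) := by
    intro v
    have h := h5 v (i v) (by rw [inv_inv])
    have habs : (φ v * i (φ v)) * φ (v * i v) = φ v * i (φ v) :=
      idem_ile_absorb_right (idem_pres5 φ h5 (pi v)) (hPM3 v)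
    rw [h]
    exact habs
  intro u
  apply iu
  · rw [hplus u]
    exact mul_inv_mul (φ u)
  · have h := hplus (i u)
    rw [inv_inv] at h
    rw [h]
    exact mul_inv_mul (φ (i u))

lemma inv_imp_2 (hPM1 : ∀ s t : S, ile (φ s * φ t) (φ (s * t)))
    (hInv : ∀ s : S, φ (i s) = i (φ s)) :
    ∀ s t : S, ile (i s * s) (t * i t) → φ s * φ t = φ (s * t) * (i (φ t) * φ t) := by
  intro s t hle
  have hst : s * (t * i t) = s := by
    have h := idem_ile_absorb_right (pi t) hle
    conv_lhs => rw [← mim s]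
    rw [mul_assoc, h, mim]
  have hx : ile (φ (s * t) * i (φ t)) (φ s) := by
    have h := hPM1 (s * t) (i t)
    rw [hInv t, mul_assoc s t (i t), hst] at h
    exact h
  have hxs := ile_mul_star hx
  calc φ s * φ t
      = φ (s * t) * (i (φ s * φ t) * (φ s * φ t)) := ile_star (hPM1 s t)
    _ = ((φ (s * t) * i (φ t)) * (i (φ s) * φ s)) * φ t := by
        rw [mul_inv_rev]; simp only [mul_assoc]
    _ = (φ (s * t) * i (φ t)) * φ t := by rw [hxs]
    _ = φ (s * t) * (i (φ t) * φ t) := mul_assoc _ _ _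

lemma inv_imp_3 (hPM1 : ∀ s t : S, ile (φ s * φ t) (φ (s * t)))
    (hInv : ∀ s : S, φ (i s) = i (φ s)) :
    ∀ s t : S, ile (t * i t) (i s * s) → φ s * φ t = (φ s * i (φ s)) * φ (s * t) := by
  intro s t hle
  have hst : (i s * s) * t = t := by
    have h := idem_ile_absorb_left (si s) hle
    conv_lhs => rw [← mul_inv_mul t]
    rw [← mul_assoc, h, mul_inv_mul]
  have hy : ile (i (φ s) * φ (s * t)) (φ t) := by
    have h := hPM1 (i s) (s * t)
    rw [hInv s, ← mul_assoc (i s) s t, hst] at h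
    exact h
  have hys := plus_mul_ile hy
  calc φ s * φ t
      = ((φ s * φ t) * i (φ s * φ t)) * φ (s * t) := ile_plus (hPM1 s t)
    _ = φ s * ((φ t * i (φ t)) * (i (φ s) * φ (s * t))) := by
        rw [mul_inv_rev]; simp only [mul_assoc]
    _ = φ s * (i (φ s) * φ (s * t)) := by rw [hys]
    _ = (φ s * i (φ s)) * φ (s * t) := (mul_assoc _ _ _).symm

end Premorphism
end ISG

theorem stmt10 {S T : Type*} [InverseSemigroup S] [InverseSemigroup T]
    (φ : S → T)
    (hPM1 : ∀ s t : S, ile (φ s * φ t) (φ (s * t)))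
    (hPM2 : ∀ s : S, ile (istar (φ s)) (φ (istar s)))
    (hPM3 : ∀ s : S, ile (iplus (φ s)) (φ (iplus s))) :
    List.TFAE
      [∀ s : S, φ (InverseSemigroup.inv s) = InverseSemigroup.inv (φ s),
       ∀ s t : S, ile (istar s) (iplus t) → φ s * φ t = φ (s * t) * istar (φ t),
       ∀ s t : S, ile (iplus t) (istar s) → φ s * φ t = iplus (φ s) * φ (s * t),
       ∀ s t : S, istar s = iplus t → φ s * φ t = φ (s * t) * istar (φ t),
       ∀ s t : S, iplus t = istar s → φ s * φ t = iplus (φ s) * φ (s * t)]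
    ∧
    (((∀ s t : S, φ (s * iplus t) * φ t = φ (s * t) * istar (φ t)) ∧
        (∀ s t : S, φ s * φ (istar s * t) = iplus (φ s) * φ (s * t))) ↔
      (∀ s : S, φ (InverseSemigroup.inv s) = InverseSemigroup.inv (φ s))) := by
  have hPM2' : ∀ s : S, ile (InverseSemigroup.inv (φ s) * φ s)
      (φ (InverseSemigroup.inv s * s)) := by
    have h := hPM2; simp only [istar] at h; exact h
  have hPM3' : ∀ s : S, ile (φ s * InverseSemigroup.inv (φ s))
      (φ (s * InverseSemigroup.inv s)) := by
    have h := hPM3; simp only [iplus] at h; exact h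
  constructor
  · tfae_have 1 → 2 := by
      intro h1 s t hle
      simp only [istar, iplus] at hle ⊢
      exact ISG.inv_imp_2 φ hPM1 h1 s t hle
    tfae_have 1 → 3 := by
      intro h1 s t hle
      simp only [istar, iplus] at hle ⊢
      exact ISG.inv_imp_3 φ hPM1 h1 s t hle
    tfae_have 2 → 4 := by
      intro h2 s t heq
      exact h2 s t (heq ▸ ISG.ile_refl _)
    tfae_have 3 → 5 := by
      intro h3 s t heq
      exact h3 s t (heq ▸ ISG.ile_refl _)
    tfae_have 4 → 1 := by
      intro h4
      simp only [istar, iplus] at h4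
      exact ISG.h4_imp_inv φ hPM2' h4
    tfae_have 5 → 1 := by
      intro h5
      simp only [istar, iplus] at h5
      exact ISG.h5_imp_inv φ hPM3' h5
    tfae_finish
  · constructor
    · rintro ⟨hLSr, -⟩
      apply ISG.h4_imp_inv φ hPM2'
      intro s t h
      have hh := hLSr s t
      simp only [iplus, istar] at hh
      rw [show s * (t * InverseSemigroup.inv t) = s by rw [← h, ISG.mim]] at hh
      exact hh
    · intro hInv
      constructor
      · intro s t
        simp only [iplus, istar]
        set e := t * InverseSemigroup.inv t with he
        have h1 : InverseSemigroup.inv (s * e) * (s * e)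
            = e * (InverseSemigroup.inv s * s) := by
          rw [ISG.mul_inv_rev, ISG.idem_inv (ISG.pi t)]
          have h2 : (e * InverseSemigroup.inv s) * (s * e)
              = e * ((InverseSemigroup.inv s * s) * e) := by simp only [mul_assoc]
          rw [h2, ISG.idem_comm (ISG.si s) (ISG.pi t), ← mul_assoc, ISG.pi t]
        have hle := ISG.ile_of_eq_mul_idem (ISG.si s) h1
        have h2 := ISG.inv_imp_2 φ hPM1 hInv (s * e) t hle
        rw [show (s * e) * t = s * t by rw [he, mul_assoc, InverseSemigroup.mul_inv_mul]] at h2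
        exact h2
      · intro s t
        simp only [iplus, istar]
        set f := InverseSemigroup.inv s * s with hf
        have h1 : (f * t) * InverseSemigroup.inv (f * t)
            = f * (t * InverseSemigroup.inv t) := by
          rw [ISG.mul_inv_rev, ISG.idem_inv (ISG.si s)]
          have h2 : (f * t) * (InverseSemigroup.inv t * f)
              = f * ((t * InverseSemigroup.inv t) * f) := by simp only [mul_assoc]
          rw [h2, ISG.idem_comm (ISG.pi t) (ISG.si s), ← mul_assoc, ISG.si s]
        have hle := ISG.ile_of_eq_mul_idem (ISG.pi t) h1
        have h2 := ISG.inv_imp_3 φ hPM1 hInv s (f * t) hle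
        rw [show s * (f * t) = s * t by rw [hf, ← mul_assoc, ISG.mim]] at h2
        exact h2
end

section
/- Let S be a restriction semigroup, T an inverse semigroup regarded as a restriction semigroup, and φ: S → T a map satisfying (PM1) (φ(s)φ(t) ≤ φ(st) for all s, t), (LSl') (φ(s)φ(t) = φ(s)^+ φ(st) whenever t^+ ≤ s^*) and (LSr') (φ(s)φ(t) = φ(st)φ(t)^* whenever s^* ≤ t^+). Then φ also satisfies (PM2) (φ(s)^* ≤ φ(s^*) for all s) and (PM3) (φ(s)^+ ≤ φ(s^+) for all s), i.e., φ is a premorphism. -/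
open RestrictionSemigroup

section InvHelpers
open InverseSemigroup
variable {T : Type*} [InverseSemigroup T]

theorem inv_inv' (a : T) : inv (inv a) = a :=
  (inv_unique (inv a) a (inv_mul_inv a) (mul_inv_mul a)).symm

theorem inv_of_idem {e : T} (he : e * e = e) : inv e = e :=
  (inv_unique e e (by rw [he, he]) (by rw [he, he])).symm

theorem istar_of_idem {e : T} (he : e * e = e) : istar e = e := by
  rw [istar, inv_of_idem he, he]

theorem iIsProj_of_idem {e : T} (he : e * e = e) : iIsProj e := ⟨e, istar_of_idem he⟩

theorem istar_idem (a : T) : istar a * istar a = istar a := by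
  rw [istar, mul_assoc, ← mul_assoc a, mul_inv_mul]

theorem iplus_idem (a : T) : iplus a * iplus a = iplus a := by
  rw [iplus, mul_assoc, ← mul_assoc (inv a), inv_mul_inv]

theorem idem_rassoc {e : T} (he : e * e = e) : ∀ x : T, e * (e * x) = e * x :=
  fun x => by rw [← mul_assoc, he]

theorem idem_mul_idem {e f : T} (he : e * e = e) (hf : f * f = f) :
    (e * f) * (e * f) = e * f := by
  set i := inv (e * f) with hi
  have he1 := idem_rassoc he
  have hf1 := idem_rassoc hf
  have hm : e * (f * (i * (e * f))) = e * f := by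
    have h := mul_inv_mul (e * f); rw [← hi] at h
    simpa only [mul_assoc] using h
  have hn : i * (e * (f * i)) = i := by
    have h := inv_mul_inv (e * f); rw [← hi] at h
    simpa only [mul_assoc] using h
  have hn1 : ∀ x : T, i * (e * (f * (i * x))) = i * x := by
    intro x
    have h := congrArg (· * x) hn
    simpa only [mul_assoc] using h
  have hb : f * i * e = i := by
    have h := inv_unique (e * f) (f * i * e) ?_ ?_
    · rw [← hi] at h; exact h
    · simp only [mul_assoc]
      rw [hf1, he1]
      exact hm
    · simp only [mul_assoc]
      rw [he1, hf1, hn1]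
  have hii : i * i = i := by
    conv_lhs => rw [← hb]
    simp only [mul_assoc]
    rw [hn1]
    simpa only [mul_assoc] using hb
  have hef : i = e * f := by
    have h := inv_inv' (e * f)
    rw [← hi, inv_of_idem hii] at h
    exact h
  rw [← hef]; exact hii

theorem idem_comm {e f : T} (he : e * e = e) (hf : f * f = f) : e * f = f * e := by
  have hef := idem_mul_idem he hf
  have hfe := idem_mul_idem hf he
  have h1 : (e * f) * (f * e) * (e * f) = e * f := by
    simp only [mul_assoc]
    rw [idem_rassoc hf, idem_rassoc he]
    simpa only [mul_assoc] using hef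
  have h2 : (f * e) * (e * f) * (f * e) = f * e := by
    simp only [mul_assoc]
    rw [idem_rassoc he, idem_rassoc hf]
    simpa only [mul_assoc] using hfe
  have h := inv_unique (e * f) (f * e) h1 h2
  rw [inv_of_idem hef] at h
  exact h.symm

theorem ile_idem_mul {e : T} (he : e * e = e) (a : T) : ile (e * a) a := by
  have hc : (a * inv a) * (a * inv a) = a * inv a := by
    have := iplus_idem a; rwa [iplus] at this
  have hfmul : a * (inv a * (e * a)) = e * a := by
    calc a * (inv a * (e * a)) = ((a * inv a) * e) * a := by simp only [mul_assoc]
      _ = (e * (a * inv a)) * a := by rw [idem_comm hc he]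
      _ = e * a := by rw [mul_assoc, mul_inv_mul]
  have hff : (inv a * (e * a)) * (inv a * (e * a)) = inv a * (e * a) := by
    calc (inv a * (e * a)) * (inv a * (e * a))
        = inv a * (e * (a * (inv a * (e * a)))) := by simp only [mul_assoc]
      _ = inv a * (e * (e * a)) := by rw [hfmul]
      _ = inv a * (e * a) := by rw [idem_rassoc he]
  exact ⟨inv a * (e * a), iIsProj_of_idem hff, hfmul.symm⟩

end InvHelpers

theorem stmt11 {S T : Type*} [RestrictionSemigroup S] [InverseSemigroup T]
    (φ : S → T)
    (hPM1 : ∀ s t : S, ile (φ s * φ t) (φ (s * t)))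
    (hLSl' : ∀ s t : S, rle (rplus t) (rstar s) → φ s * φ t = iplus (φ s) * φ (s * t))
    (hLSr' : ∀ s t : S, rle (rstar s) (rplus t) → φ s * φ t = φ (s * t) * istar (φ t)) :
    (∀ s : S, ile (istar (φ s)) (φ (rstar s))) ∧
      (∀ s : S, ile (iplus (φ s)) (φ (rplus s))) := by
  have hstarstar : ∀ s : S, rstar (rstar s) = rstar s := by
    intro s
    rw [show rstar s = rplus (rstar s) from (rplus_rstar s).symm, rstar_rplus]
  have hstaridem : ∀ s : S, rstar s * rstar s = rstar s := by
    intro s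
    have h := mul_rstar_self (rstar s)
    rwa [hstarstar s] at h
  have hplusidem : ∀ s : S, rplus s * rplus s = rplus s := by
    intro s
    have h := mul_rstar_self (rplus s)
    rwa [rstar_rplus] at h
  constructor
  · intro s
    have hc : rle (rplus (rstar s)) (rstar s) :=
      ⟨rstar s, ⟨rstar s, hstarstar s⟩, by rw [rplus_rstar]; exact (hstaridem s).symm⟩
    have h := hLSl' s (rstar s) hc
    rw [mul_rstar_self] at h
    have h2 : φ s * φ (rstar s) = φ s := by
      rw [h, iplus, InverseSemigroup.mul_inv_mul]
    have h3 : istar (φ s) = istar (φ s) * φ (rstar s) := by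
      rw [istar, mul_assoc, h2]
    rw [h3]
    exact ile_idem_mul (istar_idem (φ s)) (φ (rstar s))
  · intro s
    have hc : rle (rstar (rplus s)) (rplus s) :=
      ⟨rplus s, ⟨rplus s, rstar_rplus s⟩, by rw [rstar_rplus]; exact (hplusidem s).symm⟩
    have h := hLSr' (rplus s) s hc
    rw [rplus_mul_self] at h
    have h2 : φ (rplus s) * φ s = φ s := by
      rw [h, istar, ← mul_assoc, InverseSemigroup.mul_inv_mul]
    have h3 : iplus (φ s) = φ (rplus s) * iplus (φ s) := by
      rw [iplus, ← mul_assoc, h2]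
    exact ⟨iplus (φ s), iIsProj_of_idem (iplus_idem (φ s)), h3⟩
end

section
/- A surjective morphism ψ: S → T between restriction semigroups is proper if and only if the restriction of ψ to each R̃-class and to each L̃-class is injective; that is, if and only if for all s, t ∈ S: (ψ(s) = ψ(t) and s^+ = t^+ imply s = t) and (ψ(s) = ψ(t) and s^* = t^* imply s = t). -/
open RestrictionSemigroup

theorem stmt14 {S T : Type*} [RestrictionSemigroup S] [RestrictionSemigroup T]
    (ψ : S → T) (hsurj : Function.Surjective ψ)
    (hmul : ∀ a b : S, ψ (a * b) = ψ a * ψ b)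
    (hstar : ∀ a : S, ψ (rstar a) = rstar (ψ a))
    (hplus : ∀ a : S, ψ (rplus a) = rplus (ψ a)) :
    (∀ s t : S, ψ s = ψ t → compat s t) ↔
      ((∀ s t : S, ψ s = ψ t → rplus s = rplus t → s = t) ∧
        (∀ s t : S, ψ s = ψ t → rstar s = rstar t → s = t)) := by
  constructor
  · rintro h
    refine ⟨fun s t hst hpl => ?_, fun s t hst hpl => ?_⟩
    · have := (h s t hst).2
      calc s = rplus s * s := (rplus_mul_self s).symm
        _ = rplus t * s := by rw [hpl]
        _ = rplus s * t := this
        _ = rplus t * t := by rw [hpl]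
        _ = t := rplus_mul_self t
    · have := (h s t hst).1
      calc s = s * rstar s := (mul_rstar_self s).symm
        _ = s * rstar t := by rw [hpl]
        _ = t * rstar s := this
        _ = t * rstar t := by rw [hpl]
        _ = t := mul_rstar_self t
  · rintro ⟨hR, hL⟩ s t hst
    constructor
    · apply hL
      · rw [hmul, hmul, hstar, hstar, hst, mul_rstar_self]
      · rw [rstar_mul_rstar, rstar_mul_rstar, rstar_comm]
    · apply hR
      · rw [hmul, hmul, hplus, hplus, hst, rplus_mul_self]
      · rw [rplus_rplus_mul, rplus_rplus_mul, rplus_comm]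
end

section
/- Let ψ: T → S be a surjective morphism between restriction semigroups such that for each s ∈ S the fiber ψ⁻¹(s) has a maximum element with respect to the natural partial order of T. Then ψ is proper, i.e., ψ(u) = ψ(v) implies u ∼ v for all u, v ∈ T. -/
open RestrictionSemigroup

theorem stmt19 {T S : Type*} [RestrictionSemigroup T] [RestrictionSemigroup S]
    (ψ : T → S) (hsurj : Function.Surjective ψ)
    (hmul : ∀ a b : T, ψ (a * b) = ψ a * ψ b)
    (hstar : ∀ a : T, ψ (rstar a) = rstar (ψ a))
    (hplus : ∀ a : T, ψ (rplus a) = rplus (ψ a))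
    (hmax : ∀ s : S, ∃ m : T, ψ m = s ∧ ∀ u : T, ψ u = s → rle u m) :
    ∀ u v : T, ψ u = ψ v → compat u v := by
  intro u v huv
  obtain ⟨m, hm, hmx⟩ := hmax (ψ u)
  obtain ⟨e, ⟨a, ha⟩, hu⟩ := hmx u rfl
  obtain ⟨f, ⟨b, hb⟩, hv⟩ := hmx v huv.symm
  subst ha hb hu hv
  have key : ∀ x y : T, (m * rstar x) * rstar (m * rstar y) = m * (rstar x * rstar y) := by
    intro x y
    calc (m * rstar x) * rstar (m * rstar y)
        = (m * rstar x) * (rstar m * rstar y) := by rw [rstar_mul_rstar]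
      _ = (m * (rstar x * rstar m)) * rstar y := by simp only [mul_assoc]
      _ = (m * (rstar m * rstar x)) * rstar y := by rw [rstar_comm]
      _ = ((m * rstar m) * rstar x) * rstar y := by simp only [mul_assoc]
      _ = (m * rstar x) * rstar y := by rw [mul_rstar_self]
      _ = m * (rstar x * rstar y) := by rw [mul_assoc]
  have key2 : ∀ x y : T, rplus (m * rstar x) * (m * rstar y) = m * (rstar x * rstar y) := by
    intro x y
    calc rplus (m * rstar x) * (m * rstar y)
        = (rplus (m * rstar x) * m) * rstar y := by rw [mul_assoc]
      _ = (m * rplus (rstar x)) * rstar y := by rw [mul_rplus]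
      _ = (m * rstar x) * rstar y := by rw [rplus_rstar]
      _ = m * (rstar x * rstar y) := by rw [mul_assoc]
  exact ⟨by rw [key, key, rstar_comm], by rw [key2, key2, rstar_comm]⟩
end
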